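/- If a convex body C in Euclidean d-space is covered by finitely many planks P_1, ..., P_n (i.e., C ⊆ P_1 ∪ ... ∪ P_n), then the sum of the widths of the planks is at least the minimal width of C: w(P_1) + ... + w(P_n) ≥ w(C). -/

import Mathlib

open scoped RealInnerProductSpace

/-- The width of a set `C` in direction `u`. -/
noncomputable def dirWidth {d : ℕ} (C : Set (EuclideanSpace ℝ (Fin d)))
    (u : EuclideanSpace ℝ (Fin d)) : ℝ :=
  sSup ((fun x => ⟪x, u⟫) '' C) - sInf ((fun x => ⟪x, u⟫) '' C)

/-- The minimal width of a set `C`: the infimum of the widths over all unit directions. -/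
noncomputable def minWidth {d : ℕ} (C : Set (EuclideanSpace ℝ (Fin d))) : ℝ :=
  ⨅ u : {v : EuclideanSpace ℝ (Fin d) // ‖v‖ = 1}, dirWidth C u

/-- `P` is a plank of width `w`: the set of points between two parallel hyperplanes
at distance `w`. -/
def IsPlank {d : ℕ} (P : Set (EuclideanSpace ℝ (Fin d))) (w : ℝ) : Prop :=
  0 < w ∧ ∃ (u c : EuclideanSpace ℝ (Fin d)), ‖u‖ = 1 ∧
    P = {x | |⟪x - c, u⟫| ≤ w / 2}

namespace BangAux

variable {d : ℕ}

/-- The translate set `{x | x + s ∈ K}`. -/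
def tset (K : Set (EuclideanSpace ℝ (Fin d))) (s : EuclideanSpace ℝ (Fin d)) :
    Set (EuclideanSpace ℝ (Fin d)) := {x | x + s ∈ K}

/-- Support function. -/
noncomputable def sfn (K : Set (EuclideanSpace ℝ (Fin d))) (y : EuclideanSpace ℝ (Fin d)) : ℝ :=
  sSup ((fun x => ⟪x, y⟫) '' K)

lemma inner_cont (y : EuclideanSpace ℝ (Fin d)) :
    Continuous fun x : EuclideanSpace ℝ (Fin d) => ⟪x, y⟫ :=
  continuous_id.inner continuous_const

lemma exists_sfn_max {K : Set (EuclideanSpace ℝ (Fin d))} (hK : IsCompact K) (hne : K.Nonempty)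
    (y : EuclideanSpace ℝ (Fin d)) :
    ∃ z ∈ K, (∀ x ∈ K, ⟪x, y⟫ ≤ ⟪z, y⟫) ∧ sfn K y = ⟪z, y⟫ := by
  obtain ⟨z, hzK, hz⟩ := hK.exists_isMaxOn hne ((inner_cont y).continuousOn)
  refine ⟨z, hzK, fun x hx => hz hx, ?_⟩
  refine le_antisymm (csSup_le (hne.image _) ?_) (le_csSup ⟨⟪z, y⟫, ?_⟩ ⟨z, hzK, rfl⟩)
  · rintro r ⟨x, hx, rfl⟩; exact hz hx
  · rintro r ⟨x, hx, rfl⟩; exact hz hx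

lemma le_sfn {K : Set (EuclideanSpace ℝ (Fin d))} (hK : IsCompact K) (hne : K.Nonempty)
    {x : EuclideanSpace ℝ (Fin d)} (hx : x ∈ K) (y : EuclideanSpace ℝ (Fin d)) :
    ⟪x, y⟫ ≤ sfn K y := by
  obtain ⟨z, _, hz, hzeq⟩ := exists_sfn_max hK hne y
  rw [hzeq]; exact hz x hx

lemma sfn_le {K : Set (EuclideanSpace ℝ (Fin d))} (hne : K.Nonempty)
    {y : EuclideanSpace ℝ (Fin d)} {r : ℝ} (h : ∀ x ∈ K, ⟪x, y⟫ ≤ r) :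
    sfn K y ≤ r := by
  refine csSup_le (hne.image _) ?_
  rintro t ⟨x, hx, rfl⟩; exact h x hx

lemma sfn_zero {K : Set (EuclideanSpace ℝ (Fin d))} (hK : IsCompact K) (hne : K.Nonempty) :
    sfn K 0 = 0 := by
  refine le_antisymm (sfn_le hne fun x _ => by simp) ?_
  obtain ⟨x, hx⟩ := id hne
  simpa using le_sfn hK hne hx 0

lemma sfn_smul {K : Set (EuclideanSpace ℝ (Fin d))} (hK : IsCompact K) (hne : K.Nonempty)
    (y : EuclideanSpace ℝ (Fin d)) {r : ℝ} (hr : 0 ≤ r) :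
    sfn K (r • y) = r * sfn K y := by
  obtain ⟨z, hzK, hz, hzeq⟩ := exists_sfn_max hK hne y
  refine le_antisymm (sfn_le hne fun x hx => ?_) ?_
  · rw [real_inner_smul_right, hzeq]
    exact mul_le_mul_of_nonneg_left (hz x hx) hr
  · rw [hzeq, ← real_inner_smul_right]
    exact le_sfn hK hne hzK _

lemma sfn_add_le {K : Set (EuclideanSpace ℝ (Fin d))} (hK : IsCompact K) (hne : K.Nonempty)
    (y₁ y₂ : EuclideanSpace ℝ (Fin d)) :
    sfn K (y₁ + y₂) ≤ sfn K y₁ + sfn K y₂ := by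
  obtain ⟨z, hzK, hz, hzeq⟩ := exists_sfn_max hK hne (y₁ + y₂)
  rw [hzeq, inner_add_right]
  exact add_le_add (le_sfn hK hne hzK y₁) (le_sfn hK hne hzK y₂)

/-- The width functional. -/
noncomputable def wfn (K : Set (EuclideanSpace ℝ (Fin d))) (v : EuclideanSpace ℝ (Fin d)) : ℝ :=
  sfn K v + sfn K (-v)

lemma dirWidth_eq_wfn {K : Set (EuclideanSpace ℝ (Fin d))} (hK : IsCompact K) (hne : K.Nonempty)
    (v : EuclideanSpace ℝ (Fin d)) :
    sSup ((fun x => ⟪x, v⟫) '' K) - sInf ((fun x => ⟪x, v⟫) '' K) = wfn K v := by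
  obtain ⟨z, hzK, hz, hzeq⟩ := exists_sfn_max hK hne (-v)
  have hinf : sInf ((fun x => ⟪x, v⟫) '' K) = ⟪z, v⟫ := by
    refine le_antisymm (csInf_le ⟨-sfn K (-v), ?_⟩ ⟨z, hzK, rfl⟩) (le_csInf (hne.image _) ?_)
    · rintro r ⟨x, hx, rfl⟩
      have := le_sfn hK hne hx (-v)
      rw [inner_neg_right] at this; linarith
    · rintro r ⟨x, hx, rfl⟩
      have := hz x hx
      rw [inner_neg_right, inner_neg_right] at this; linarith
  have : sfn K (-v) = -⟪z, v⟫ := by rw [hzeq, inner_neg_right]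
  rw [hinf, wfn, this]; unfold sfn; ring

lemma wfn_nonneg {K : Set (EuclideanSpace ℝ (Fin d))} (hK : IsCompact K) (hne : K.Nonempty)
    (v : EuclideanSpace ℝ (Fin d)) : 0 ≤ wfn K v := by
  obtain ⟨x, hx⟩ := id hne
  have h1 := le_sfn hK hne hx v
  have h2 := le_sfn hK hne hx (-v)
  rw [inner_neg_right] at h2
  unfold wfn; linarith

lemma wfn_smul {K : Set (EuclideanSpace ℝ (Fin d))} (hK : IsCompact K) (hne : K.Nonempty)
    (v : EuclideanSpace ℝ (Fin d)) {r : ℝ} (hr : 0 ≤ r) :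
    wfn K (r • v) = r * wfn K v := by
  unfold wfn
  rw [← smul_neg, sfn_smul hK hne v hr, sfn_smul hK hne (-v) hr]; ring

lemma wfn_of_unit_bound {K : Set (EuclideanSpace ℝ (Fin d))} (hK : IsCompact K) (hne : K.Nonempty)
    {ω : ℝ} (hw : ∀ v : EuclideanSpace ℝ (Fin d), ‖v‖ = 1 → ω ≤ wfn K v)
    {p : EuclideanSpace ℝ (Fin d)} (hp : p ≠ 0) : ω * ‖p‖ ≤ wfn K p := by
  have hpn : (0:ℝ) < ‖p‖ := norm_pos_iff.2 hp
  have hu : ‖(‖p‖⁻¹ • p)‖ = 1 := by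
    rw [norm_smul, norm_inv, norm_norm, inv_mul_cancel₀ hpn.ne']
  have := hw _ hu
  have h2 : wfn K p = ‖p‖ * wfn K (‖p‖⁻¹ • p) := by
    rw [← wfn_smul hK hne _ hpn.le, smul_smul, mul_inv_cancel₀ hpn.ne', one_smul]
  rw [h2, mul_comm ω ‖p‖]
  exact mul_le_mul_of_nonneg_left this hpn.le

/-- helper: from `α + t*β < γ` for all small positive `t`, deduce `α ≤ γ`. -/
lemma le_of_small_pos {α β γ t₀ : ℝ} (ht₀ : 0 < t₀)
    (h : ∀ t : ℝ, 0 < t → t ≤ t₀ → α + t * β < γ) : α ≤ γ := by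
  by_contra hc
  push_neg at hc
  have hag : 0 < α - γ := by linarith
  have hb : (0:ℝ) < |β| + 1 := by positivity
  set t := min t₀ ((α - γ) / (2 * (|β| + 1))) with ht
  have htpos : 0 < t := lt_min ht₀ (div_pos hag (by positivity))
  have h1 : t * |β| ≤ (α - γ) / 2 := by
    have h0 : t ≤ (α - γ) / (2 * (|β| + 1)) := min_le_right _ _
    have : t * (|β| + 1) ≤ ((α - γ) / (2 * (|β| + 1))) * (|β| + 1) :=
      mul_le_mul_of_nonneg_right h0 hb.le
    have heq : ((α - γ) / (2 * (|β| + 1))) * (|β| + 1) = (α - γ) / 2 := by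
      field_simp
    nlinarith [abs_nonneg β]
  have h2 := h t htpos (min_le_left _ _)
  have h3 : -(t * |β|) ≤ t * β := by
    have := neg_abs_le β
    nlinarith
  linarith

/-- Convex set contained in the union of two "gapped" parallel halfspaces lies in one of them. -/
lemma convex_union_gap {A : Set (EuclideanSpace ℝ (Fin d))} (hA : Convex ℝ A)
    (v : EuclideanSpace ℝ (Fin d)) {α β : ℝ} (hαβ : α < β)
    (hsub : ∀ x ∈ A, ⟪x, v⟫ ≤ α ∨ β ≤ ⟪x, v⟫) :
    (∀ x ∈ A, ⟪x, v⟫ ≤ α) ∨ (∀ x ∈ A, β ≤ ⟪x, v⟫) := by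
  by_contra hc
  push_neg at hc
  obtain ⟨⟨x, hx, hxv⟩, ⟨y, hy, hyv⟩⟩ := hc
  have hxβ : β ≤ ⟪x, v⟫ := (hsub x hx).resolve_left (by linarith)
  have hyα : ⟪y, v⟫ ≤ α := (hsub y hy).resolve_right (by linarith)
  set m := (α + β) / 2 with hm
  set t := (m - ⟪y, v⟫) / (⟪x, v⟫ - ⟪y, v⟫) with htd
  have hden : 0 < ⟪x, v⟫ - ⟪y, v⟫ := by linarith
  have ht0 : 0 ≤ t := by
    apply div_nonneg _ hden.le; linarith
  have ht1 : t ≤ 1 := by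
    rw [div_le_one hden]; linarith
  have hz : (1 - t) • y + t • x ∈ A := hA hy hx (by linarith) ht0 (by ring)
  have hzv : ⟪(1 - t) • y + t • x, v⟫ = m := by
    have hmul : t * (⟪x, v⟫ - ⟪y, v⟫) = m - ⟪y, v⟫ := div_mul_cancel₀ _ hden.ne'
    rw [inner_add_left, real_inner_smul_left, real_inner_smul_left]
    nlinarith [hmul]
  rcases hsub _ hz with h | h <;> rw [hzv] at h <;> simp [hm] at h <;> linarith

/-- A convex compact set with all unit-direction widths ≥ ω > 0 has nonempty interior. -/
lemma interior_nonempty_of_wfn {K : Set (EuclideanSpace ℝ (Fin d))} (hK : IsCompact K)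
    (hconv : Convex ℝ K) (hne : K.Nonempty) {ω : ℝ} (hω : 0 < ω)
    (hw : ∀ v : EuclideanSpace ℝ (Fin d), ‖v‖ = 1 → ω ≤ sfn K v + sfn K (-v)) :
    (interior K).Nonempty := by
  rw [hconv.interior_nonempty_iff_affineSpan_eq_top]
  by_contra htop
  obtain ⟨p, hp⟩ := id hne
  -- direction of the affine span is a proper submodule
  have hdir : (affineSpan ℝ K).direction ≠ ⊤ := by
    intro h
    apply htop
    rwa [AffineSubspace.direction_eq_top_iff_of_nonempty
      (hne.mono (subset_affineSpan ℝ K))] at h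
  obtain ⟨v₀, hv₀mem, hv₀⟩ : ∃ v₀ ∈ ((affineSpan ℝ K).direction)ᗮ, v₀ ≠ 0 := by
    by_contra hcon
    push_neg at hcon
    apply hdir
    have : ((affineSpan ℝ K).direction)ᗮ = ⊥ := by
      rw [Submodule.eq_bot_iff]
      intro y hy
      by_contra hy0
      exact hy0 (hcon y hy)
    rwa [← Submodule.orthogonal_eq_bot_iff]
  set v := ‖v₀‖⁻¹ • v₀ with hv
  have hvnorm : ‖v‖ = 1 := by
    rw [hv, norm_smul, norm_inv, norm_norm, inv_mul_cancel₀ (norm_ne_zero_iff.2 hv₀)]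
  have hvperp : v ∈ ((affineSpan ℝ K).direction)ᗮ := Submodule.smul_mem _ _ hv₀mem
  have hconst : ∀ x ∈ K, ⟪x, v⟫ = ⟪p, v⟫ := by
    intro x hx
    have hxp : x - p ∈ (affineSpan ℝ K).direction := by
      have := AffineSubspace.vsub_mem_direction (subset_affineSpan ℝ K hx)
        (subset_affineSpan ℝ K hp)
      simpa using this
    have h2 : ⟪x - p, v⟫ = 0 := (Submodule.mem_orthogonal _ v).1 hvperp (x - p) hxp
    rw [inner_sub_left] at h2; linarith
  have h1 : sfn K v ≤ ⟪p, v⟫ := by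
    apply csSup_le (hne.image _)
    rintro r ⟨x, hx, rfl⟩
    exact (hconst x hx).le
  have h2 : sfn K (-v) ≤ -⟪p, v⟫ := by
    apply csSup_le (hne.image _)
    rintro r ⟨x, hx, rfl⟩
    simp only [inner_neg_right]
    rw [hconst x hx]
  have := hw v hvnorm
  linarith

lemma convex_halfspace_gt' (v : EuclideanSpace ℝ (Fin d)) (c : ℝ) :
    Convex ℝ {x : EuclideanSpace ℝ (Fin d) | c < ⟪x, v⟫} := by
  intro x hx y hy a b ha hb hab
  simp only [Set.mem_setOf_eq] at *
  rw [inner_add_left, real_inner_smul_left, real_inner_smul_left]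
  have h1 : a * c ≤ a * ⟪x, v⟫ := mul_le_mul_of_nonneg_left hx.le ha
  have h2 : b * c ≤ b * ⟪y, v⟫ := mul_le_mul_of_nonneg_left hy.le hb
  have hc : a * c + b * c = c := by
    have : (a + b) * c = 1 * c := by rw [hab]
    nlinarith [this]
  have hpos : 0 < a ∨ 0 < b := by
    by_contra hcon
    push_neg at hcon
    have : a = 0 := le_antisymm hcon.1 ha
    have : b = 0 := le_antisymm hcon.2 hb
    simp_all
  rcases hpos with h | h
  · have h1' : a * c < a * ⟪x, v⟫ := mul_lt_mul_of_pos_left hx h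
    linarith
  · have h2' : b * c < b * ⟪y, v⟫ := mul_lt_mul_of_pos_left hy h
    linarith

/-- dual basis pair for two "independent" vectors -/
lemma exists_dual_pair {v g : EuclideanSpace ℝ (Fin d)} (hv : v ≠ 0) (hg : g ≠ 0)
    (hdep : g - (⟪v, g⟫ / ‖v‖ ^ 2) • v ≠ 0) :
    ∃ yv yg : EuclideanSpace ℝ (Fin d),
      ⟪yv, v⟫ = 1 ∧ ⟪yv, g⟫ = 0 ∧ ⟪yg, v⟫ = 0 ∧ ⟪yg, g⟫ = 1 := by
  have hv2 : (0:ℝ) < ‖v‖ ^ 2 := pow_pos (norm_pos_iff.2 hv) 2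
  have hg2 : (0:ℝ) < ‖g‖ ^ 2 := pow_pos (norm_pos_iff.2 hg) 2
  have hvv : ⟪v, v⟫ = ‖v‖ ^ 2 := real_inner_self_eq_norm_sq v
  have hgg : ⟪g, g⟫ = ‖g‖ ^ 2 := real_inner_self_eq_norm_sq g
  set gp := g - (⟪v, g⟫ / ‖v‖ ^ 2) • v with hgp_def
  set vp := v - (⟪g, v⟫ / ‖g‖ ^ 2) • g with hvp_def
  have hgpv : ⟪gp, v⟫ = 0 := by
    rw [hgp_def, inner_sub_left, real_inner_smul_left, real_inner_comm g v, hvv]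
    field_simp
    ring
  have hvpg : ⟪vp, g⟫ = 0 := by
    rw [hvp_def, inner_sub_left, real_inner_smul_left, real_inner_comm v g, hgg]
    field_simp
    ring
  have hvp : vp ≠ 0 := by
    intro h0
    apply hdep
    have hveq : v = (⟪g, v⟫ / ‖g‖ ^ 2) • g := sub_eq_zero.1 h0
    set τ := ⟪g, v⟫ / ‖g‖ ^ 2 with hτ_def
    have hτ : τ ≠ 0 := by
      intro h1; rw [h1, zero_smul] at hveq; exact hv hveq
    have h2 : ⟪v, g⟫ = τ * ‖g‖ ^ 2 := by
      rw [hveq, real_inner_smul_left, hgg]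
    have h3 : ‖v‖ ^ 2 = τ ^ 2 * ‖g‖ ^ 2 := by
      rw [← real_inner_self_eq_norm_sq, hveq, real_inner_smul_left, real_inner_smul_right, hgg]
      ring
    rw [hgp_def, h2, h3, hveq, smul_smul]
    have : τ * ‖g‖ ^ 2 / (τ ^ 2 * ‖g‖ ^ 2) * τ = 1 := by
      field_simp
    rw [this, one_smul, sub_self]
  have hgp2 : (0:ℝ) < ‖gp‖ ^ 2 := pow_pos (norm_pos_iff.2 hdep) 2
  have hvp2 : (0:ℝ) < ‖vp‖ ^ 2 := pow_pos (norm_pos_iff.2 hvp) 2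
  refine ⟨(‖vp‖ ^ 2)⁻¹ • vp, (‖gp‖ ^ 2)⁻¹ • gp, ?_, ?_, ?_, ?_⟩
  · have hvpv : ⟪vp, v⟫ = ‖vp‖ ^ 2 := by
      have hveq : v = vp + (⟪g, v⟫ / ‖g‖ ^ 2) • g := by rw [hvp_def]; abel
      calc ⟪vp, v⟫ = ⟪vp, vp + (⟪g, v⟫ / ‖g‖ ^ 2) • g⟫ := by rw [← hveq]
        _ = ‖vp‖ ^ 2 + (⟪g, v⟫ / ‖g‖ ^ 2) * ⟪vp, g⟫ := by
            rw [inner_add_right, real_inner_smul_right, real_inner_self_eq_norm_sq]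
        _ = ‖vp‖ ^ 2 := by rw [hvpg]; ring
    rw [real_inner_smul_left, hvpv, inv_mul_cancel₀ hvp2.ne']
  · rw [real_inner_smul_left, hvpg, mul_zero]
  · rw [real_inner_smul_left, hgpv, mul_zero]
  · have hgpg : ⟪gp, g⟫ = ‖gp‖ ^ 2 := by
      have hgeq : g = gp + (⟪v, g⟫ / ‖v‖ ^ 2) • v := by rw [hgp_def]; abel
      calc ⟪gp, g⟫ = ⟪gp, gp + (⟪v, g⟫ / ‖v‖ ^ 2) • v⟫ := by rw [← hgeq]
        _ = ‖gp‖ ^ 2 + (⟪v, g⟫ / ‖v‖ ^ 2) * ⟪gp, v⟫ := by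
            rw [inner_add_right, real_inner_smul_right, real_inner_self_eq_norm_sq]
        _ = ‖gp‖ ^ 2 := by rw [hgpv]; ring
    rw [real_inner_smul_left, hgpg, inv_mul_cancel₀ hgp2.ne']

/-- Lemma U -/
lemma lemmaU {A : Set (EuclideanSpace ℝ (Fin d))} (hA : Convex ℝ A) (hAne : A.Nonempty)
    {v g : EuclideanSpace ℝ (Fin d)} (hv : v ≠ 0) (hg : g ≠ 0) {c c' : ℝ}
    (hsub : ∀ x ∈ A, ⟪x, v⟫ ≤ c ∨ ⟪x, g⟫ ≤ c') :
    ∃ lam mu : ℝ, 0 ≤ lam ∧ 0 ≤ mu ∧ 0 < lam + mu ∧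
      ∀ x ∈ A, lam * ⟪x, v⟫ + mu * ⟪x, g⟫ ≤ lam * c + mu * c' := by
  have hv2 : (0:ℝ) < ‖v‖ ^ 2 := pow_pos (norm_pos_iff.2 hv) 2
  by_cases hdep : g - (⟪v, g⟫ / ‖v‖ ^ 2) • v = 0
  · -- dependent case : g = ρ • v
    set ρ := ⟪v, g⟫ / ‖v‖ ^ 2 with hρ_def
    have hgv : g = ρ • v := sub_eq_zero.1 hdep
    have hρ : ρ ≠ 0 := by
      intro h0; rw [h0, zero_smul] at hgv; exact hg hgv
    have hxg : ∀ x : EuclideanSpace ℝ (Fin d), ⟪x, g⟫ = ρ * ⟪x, v⟫ := by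
      intro x; rw [hgv, real_inner_smul_right]
    rcases lt_or_gt_of_ne hρ with hneg | hpos
    · by_cases hcc : c' / ρ ≤ c
      · refine ⟨-ρ, 1, by linarith, by linarith, by linarith, fun x _ => ?_⟩
        rw [hxg]
        have : ρ * c ≤ c' := by
          have := mul_le_mul_of_nonpos_left hcc (le_of_lt hneg)
          rw [mul_div_cancel₀ _ hρ] at this; linarith [this]
        nlinarith
      · push_neg at hcc
        have hsub' : ∀ x ∈ A, ⟪x, v⟫ ≤ c ∨ c' / ρ ≤ ⟪x, v⟫ := by
          intro x hx
          rcases hsub x hx with h | h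
          · exact Or.inl h
          · right
            rw [hxg] at h
            rw [div_le_iff_of_neg hneg]; linarith
        rcases convex_union_gap hA v hcc hsub' with hall | hall
        · exact ⟨1, 0, by norm_num, by norm_num, by norm_num, fun x hx => by
            simpa using hall x hx⟩
        · refine ⟨0, 1, by norm_num, by norm_num, by norm_num, fun x hx => ?_⟩
          have := hall x hx
          rw [hxg]
          have h2 : ρ * ⟪x, v⟫ ≤ ρ * (c' / ρ) := mul_le_mul_of_nonpos_left this (le_of_lt hneg)
          rw [mul_div_cancel₀ _ hρ] at h2
          simpa using h2
    · by_cases hcc : c' / ρ ≤ c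
      · refine ⟨1, 0, by norm_num, by norm_num, by norm_num, fun x hx => ?_⟩
        rcases hsub x hx with h | h
        · simpa using h
        · rw [hxg] at h
          have : ⟪x, v⟫ ≤ c' / ρ := by rw [le_div_iff₀ hpos]; linarith
          simpa using this.trans hcc
      · push_neg at hcc
        refine ⟨0, 1, by norm_num, by norm_num, by norm_num, fun x hx => ?_⟩
        rcases hsub x hx with h | h
        · rw [hxg]
          have : ⟪x, v⟫ ≤ c' / ρ := h.trans hcc.le
          have h2 : ρ * ⟪x, v⟫ ≤ ρ * (c' / ρ) := mul_le_mul_of_nonneg_left this hpos.le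
          rw [mul_div_cancel₀ _ hρ] at h2
          simpa using h2
        · simpa using h
  · -- independent case
    obtain ⟨yv, yg, hyvv, hyvg, hygv, hygg⟩ := exists_dual_pair hv hg hdep
    set Q := {x : EuclideanSpace ℝ (Fin d) | c < ⟪x, v⟫ ∧ c' < ⟪x, g⟫} with hQ_def
    have hQopen : IsOpen Q :=
      (isOpen_lt continuous_const (inner_cont v)).inter
        (isOpen_lt continuous_const (inner_cont g))
    have hQconv : Convex ℝ Q :=
      (convex_halfspace_gt' v c).inter (convex_halfspace_gt' g c')
    have hx₁Q : ∀ s t : ℝ, 0 ≤ s → 0 ≤ t → (c + s + 1) • yv + (c' + t + 1) • yg ∈ Q := by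
      intro s t hs ht
      constructor
      · simp only [Set.mem_setOf_eq, inner_add_left, real_inner_smul_left, hyvv, hygv]
        linarith
      · simp only [Set.mem_setOf_eq, inner_add_left, real_inner_smul_left, hyvg, hygg]
        linarith
    have hdisj : Disjoint Q A := by
      rw [Set.disjoint_left]
      intro x hxQ hxA
      rcases hsub x hxA with h | h
      · exact absurd h (not_le.2 hxQ.1)
      · exact absurd h (not_le.2 hxQ.2)
    obtain ⟨f, e, hfQ, hfA⟩ := geometric_hahn_banach_open hQconv hQopen hA hdisj
    set g₂ := (InnerProductSpace.toDual ℝ (EuclideanSpace ℝ (Fin d))).symm f with hg₂_def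
    have hrep : ∀ x, f x = ⟪g₂, x⟫ := fun x => (InnerProductSpace.toDual_symm_apply).symm
    set x₁ := (c + 0 + 1) • yv + (c' + 0 + 1) • yg with hx₁_def
    have hx₁ : x₁ ∈ Q := hx₁Q 0 0 le_rfl le_rfl
    have hg₂ne : g₂ ≠ 0 := by
      intro h0
      obtain ⟨a₀, ha₀⟩ := hAne
      have h1 := hfQ x₁ hx₁
      have h2 := hfA a₀ ha₀
      rw [hrep, h0] at h1 h2
      simp only [inner_zero_left] at h1 h2
      linarith
    have horth : ∀ y : EuclideanSpace ℝ (Fin d), ⟪y, v⟫ = 0 → ⟪y, g⟫ = 0 → ⟪g₂, y⟫ = 0 := by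
      intro y hyv0 hyg0
      by_contra h0
      have hmem : ∀ t : ℝ, x₁ + t • y ∈ Q := by
        intro t
        have h1 := hx₁.1
        have h2 := hx₁.2
        constructor
        · simp only [Set.mem_setOf_eq, inner_add_left, real_inner_smul_left, hyv0] at *
          linarith
        · simp only [Set.mem_setOf_eq, inner_add_left, real_inner_smul_left, hyg0] at *
          linarith
      have hlin : ∀ t : ℝ, f x₁ + t * ⟪g₂, y⟫ < e := by
        intro t
        have := hfQ _ (hmem t)
        rwa [map_add, map_smul, smul_eq_mul, hrep y] at this
      have := hlin ((e - f x₁ + 1) / ⟪g₂, y⟫)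
      rw [div_mul_cancel₀ _ h0] at this
      linarith
    have hspan : g₂ ∈ Submodule.span ℝ {v, g} := by
      have hmem : g₂ ∈ (Submodule.span ℝ {v, g})ᗮᗮ := by
        rw [Submodule.mem_orthogonal]
        intro y hy
        rw [Submodule.mem_orthogonal] at hy
        have h1 : ⟪v, y⟫ = 0 := hy v (Submodule.subset_span (by simp))
        have h2 : ⟪g, y⟫ = 0 := hy g (Submodule.subset_span (by simp))
        rw [real_inner_comm]
        exact horth y (by rwa [real_inner_comm]) (by rwa [real_inner_comm])
      rwa [Submodule.orthogonal_orthogonal] at hmem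
    obtain ⟨a, b, hab⟩ := Submodule.mem_span_pair.1 hspan
    have hfx : ∀ x : EuclideanSpace ℝ (Fin d), ⟪g₂, x⟫ = a * ⟪x, v⟫ + b * ⟪x, g⟫ := by
      intro x
      rw [← hab, inner_add_left, real_inner_smul_left, real_inner_smul_left,
        real_inner_comm v x, real_inner_comm g x]
    have hfQ' : ∀ x ∈ Q, a * ⟪x, v⟫ + b * ⟪x, g⟫ < e := by
      intro x hx
      have := hfQ x hx
      rwa [hrep, hfx] at this
    have hfx₁ : a * (c + 0 + 1) + b * (c' + 0 + 1) < e := by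
      have := hfQ' x₁ hx₁
      simp only [hx₁_def, inner_add_left, real_inner_smul_left, hyvv, hyvg, hygv, hygg] at this
      calc a * (c + 0 + 1) + b * (c' + 0 + 1)
          = a * ((c + 0 + 1) * 1 + (c' + 0 + 1) * 0) + b * ((c + 0 + 1) * 0 + (c' + 0 + 1) * 1) := by
            ring
        _ < e := this
    have key : ∀ s t : ℝ, 0 ≤ s → 0 ≤ t → a * (c + s + 1) + b * (c' + t + 1) < e := by
      intro s t hs ht
      have := hfQ' _ (hx₁Q s t hs ht)
      simp only [inner_add_left, real_inner_smul_left, hyvv, hyvg, hygv, hygg] at this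
      calc a * (c + s + 1) + b * (c' + t + 1)
          = a * ((c + s + 1) * 1 + (c' + t + 1) * 0) + b * ((c + s + 1) * 0 + (c' + t + 1) * 1) := by
            ring
        _ < e := this
    have ha : a ≤ 0 := by
      by_contra h0
      push_neg at h0
      have h1 := key ((e - (a * (c + 0 + 1) + b * (c' + 0 + 1)) + 1) / a) 0
        (le_of_lt (div_pos (by linarith) h0)) le_rfl
      rw [show a * (c + (e - (a * (c + 0 + 1) + b * (c' + 0 + 1)) + 1) / a + 1)
          = a * (c + 0 + 1) + a * ((e - (a * (c + 0 + 1) + b * (c' + 0 + 1)) + 1) / a) by ring,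
        mul_div_cancel₀ _ h0.ne'] at h1
      linarith
    have hb : b ≤ 0 := by
      by_contra h0
      push_neg at h0
      have h1 := key 0 ((e - (a * (c + 0 + 1) + b * (c' + 0 + 1)) + 1) / b)
        le_rfl (le_of_lt (div_pos (by linarith) h0))
      rw [show b * (c' + (e - (a * (c + 0 + 1) + b * (c' + 0 + 1)) + 1) / b + 1)
          = b * (c' + 0 + 1) + b * ((e - (a * (c + 0 + 1) + b * (c' + 0 + 1)) + 1) / b) by ring,
        mul_div_cancel₀ _ h0.ne'] at h1
      linarith
    -- corner bound : a * c + b * c' ≤ e via points approaching the corner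
    have hcorner : a * c + b * c' ≤ e := by
      apply le_of_small_pos (t₀ := 1) one_pos
      intro t ht ht1
      have hmem : (c + t) • yv + (c' + t) • yg ∈ Q := by
        constructor
        · simp only [Set.mem_setOf_eq, inner_add_left, real_inner_smul_left, hyvv, hygv]
          linarith
        · simp only [Set.mem_setOf_eq, inner_add_left, real_inner_smul_left, hyvg, hygg]
          linarith
      have := hfQ' _ hmem
      simp only [inner_add_left, real_inner_smul_left, hyvv, hyvg, hygv, hygg] at this
      calc a * c + b * c' + t * (a + b)
          = a * ((c + t) * 1 + (c' + t) * 0) + b * ((c + t) * 0 + (c' + t) * 1) := by ring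
        _ < e := this
    have habne : a < 0 ∨ b < 0 := by
      by_contra h0
      push_neg at h0
      have ha0 : a = 0 := le_antisymm ha h0.1
      have hb0 : b = 0 := le_antisymm hb h0.2
      apply hg₂ne
      rw [← hab, ha0, hb0]; simp
    refine ⟨-a, -b, by linarith, by linarith, by rcases habne with h | h <;> linarith, ?_⟩
    intro x hx
    have h1 := hfA x hx
    rw [hrep, hfx] at h1
    linarith
-- new material
lemma small_keep {c α β : ℝ} (h : c < α) :
    ∃ t₀ : ℝ, 0 < t₀ ∧ t₀ ≤ 1 ∧ ∀ t : ℝ, 0 < t → t ≤ t₀ → c < α + t * β := by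
  have hb : (0:ℝ) < |β| + 1 := by positivity
  refine ⟨min 1 ((α - c) / (2 * (|β| + 1))), lt_min one_pos (div_pos (by linarith) (by positivity)),
    min_le_left _ _, fun t ht ht0 => ?_⟩
  have h1 : t * |β| ≤ (α - c) / 2 := by
    have h0 : t ≤ (α - c) / (2 * (|β| + 1)) := le_trans ht0 (min_le_right _ _)
    have h2 : t * (|β| + 1) ≤ ((α - c) / (2 * (|β| + 1))) * (|β| + 1) :=
      mul_le_mul_of_nonneg_right h0 hb.le
    have heq : ((α - c) / (2 * (|β| + 1))) * (|β| + 1) = (α - c) / 2 := by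
      field_simp
    nlinarith [abs_nonneg β]
  have h3 : -(t * |β|) ≤ t * β := by
    have := neg_abs_le β
    nlinarith
  linarith

lemma tset_eq_image (K : Set (EuclideanSpace ℝ (Fin d))) (s : EuclideanSpace ℝ (Fin d)) :
    tset K s = (fun y => y - s) '' K := by
  ext x
  constructor
  · intro hx
    exact ⟨x + s, hx, by simpa using add_sub_cancel_right x s⟩
  · rintro ⟨y, hy, rfl⟩
    have : y - s + s = y := by abel
    simp only [tset, Set.mem_setOf_eq, this]
    exact hy

lemma tset_compact {K : Set (EuclideanSpace ℝ (Fin d))} (hK : IsCompact K)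
    (s : EuclideanSpace ℝ (Fin d)) : IsCompact (tset K s) := by
  rw [tset_eq_image]
  exact hK.image (continuous_id.sub continuous_const)

lemma tset_convex {K : Set (EuclideanSpace ℝ (Fin d))} (hK : Convex ℝ K)
    (s : EuclideanSpace ℝ (Fin d)) : Convex ℝ (tset K s) := by
  intro x hx y hy a b ha hb hab
  have h := hK hx hy ha hb hab
  simp only [tset, Set.mem_setOf_eq] at *
  have heq : a • x + b • y + s = a • (x + s) + b • (y + s) := by
    rw [smul_add, smul_add]
    rw [show a • x + a • s + (b • y + b • s) = a • x + b • y + (a • s + b • s) by abel,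
      ← add_smul, hab, one_smul]
  rw [heq]
  exact h

lemma tset_nonempty {K : Set (EuclideanSpace ℝ (Fin d))} {s x : EuclideanSpace ℝ (Fin d)}
    (hx : x ∈ K) : (tset K s).Nonempty := by
  refine ⟨x - s, ?_⟩
  have : x - s + s = x := by abel
  simp only [tset, Set.mem_setOf_eq, this]
  exact hx

lemma sfn_tset {K : Set (EuclideanSpace ℝ (Fin d))} (hK : IsCompact K) (hne : K.Nonempty)
    (s y : EuclideanSpace ℝ (Fin d)) : sfn (tset K s) y = sfn K y - ⟪s, y⟫ := by
  obtain ⟨z, hz, hzmax, hzeq⟩ := exists_sfn_max hK hne y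
  have hzs : z - s ∈ tset K s := by
    have : z - s + s = z := by abel
    simp only [tset, Set.mem_setOf_eq, this]; exact hz
  refine le_antisymm (sfn_le ⟨z - s, hzs⟩ fun x hx => ?_) ?_
  · have hxs : x + s ∈ K := hx
    have := hzmax _ hxs
    rw [inner_add_left] at this
    rw [hzeq]; linarith
  · have := le_sfn (tset_compact hK s) ⟨z - s, hzs⟩ hzs y
    rw [inner_sub_left] at this
    rw [hzeq]; linarith

lemma interior_tset (K : Set (EuclideanSpace ℝ (Fin d))) (s : EuclideanSpace ℝ (Fin d)) :
    interior (tset K s) = tset (interior K) s := by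
  have : tset K s = (Homeomorph.addRight s) ⁻¹' K := rfl
  rw [this, ← Homeomorph.preimage_interior]
  rfl

/-- The key duality step: a support-function decomposition for `K ∩ (K - s)`. -/
lemma dual_decomp {K : Set (EuclideanSpace ℝ (Fin d))} (hK : IsCompact K) (hconv : Convex ℝ K)
    {s z₀ : EuclideanSpace ℝ (Fin d)} (hz₁ : z₀ ∈ interior K) (hz₂ : z₀ + s ∈ interior K)
    {v : EuclideanSpace ℝ (Fin d)} (hv : v ≠ 0) :
    ∃ a b : EuclideanSpace ℝ (Fin d), a + b = v ∧
      sfn K a + (sfn K b - ⟪s, b⟫) ≤ sfn (K ∩ tset K s) v := by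
  have hne : K.Nonempty := ⟨z₀, interior_subset hz₁⟩
  set B := tset K s with hB_def
  have hBcomp : IsCompact B := tset_compact hK s
  have hBconv : Convex ℝ B := tset_convex hconv s
  have hz₀B : z₀ ∈ B := interior_subset (by rw [hB_def, interior_tset]; exact hz₂)
  have hz₀Bi : z₀ ∈ interior B := by rw [hB_def, interior_tset]; exact hz₂
  have hBne : B.Nonempty := ⟨z₀, hz₀B⟩
  set K' := K ∩ B with hK'_def
  have hK'comp : IsCompact K' := hK.inter_right hBcomp.isClosed
  have hK'ne : K'.Nonempty := ⟨z₀, interior_subset hz₁, hz₀B⟩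
  set c := sfn K' v with hc_def
  have hle : ∀ x ∈ K', ⟪x, v⟫ ≤ c := fun x hx => le_sfn hK'comp hK'ne hx v
  by_cases hAD : ∀ x ∈ K, ⟪x, v⟫ ≤ c
  · refine ⟨v, 0, add_zero v, ?_⟩
    rw [sfn_zero hK hne, inner_zero_right]
    simpa using sfn_le hne hAD
  by_cases hBD : ∀ x ∈ B, ⟪x, v⟫ ≤ c
  · refine ⟨0, v, zero_add v, ?_⟩
    rw [sfn_zero hK hne]
    have : sfn B v ≤ c := sfn_le hBne hBD
    rw [sfn_tset hK hne] at this
    linarith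
  push_neg at hAD hBD
  obtain ⟨xA, hxA, hxAv⟩ := hAD
  obtain ⟨xB, hxB, hxBv⟩ := hBD
  set U := interior K ∩ {x : EuclideanSpace ℝ (Fin d) | c < ⟪x, v⟫} with hU_def
  set V := interior B ∩ {x : EuclideanSpace ℝ (Fin d) | c < ⟪x, v⟫} with hV_def
  have hUopen : IsOpen U := isOpen_interior.inter (isOpen_lt continuous_const (inner_cont v))
  have hVopen : IsOpen V := isOpen_interior.inter (isOpen_lt continuous_const (inner_cont v))
  have hUconv : Convex ℝ U := hconv.interior.inter (convex_halfspace_gt' v c)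
  have hVconv : Convex ℝ V := hBconv.interior.inter (convex_halfspace_gt' v c)
  -- approximation into the interior keeping the strict inequality
  have happrox : ∀ (S : Set (EuclideanSpace ℝ (Fin d))), Convex ℝ S → ∀ x ∈ S,
      ∀ zi ∈ interior S, c < ⟪x, v⟫ →
      ∃ t : ℝ, 0 < t ∧ t ≤ 1 ∧ x + t • (zi - x) ∈ interior S ∧ c < ⟪x + t • (zi - x), v⟫ := by
    intro S hS x hx zi hzi hxv
    obtain ⟨t₀, ht₀, ht₀1, hkeep⟩ := small_keep (β := ⟪zi - x, v⟫) hxv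
    refine ⟨t₀, ht₀, ht₀1, hS.add_smul_sub_mem_interior hx hzi ⟨ht₀, ht₀1⟩, ?_⟩
    have := hkeep t₀ ht₀ le_rfl
    rw [inner_add_left, real_inner_smul_left]
    exact this
  have hUne : U.Nonempty := by
    obtain ⟨t, ht, ht1, hmem, hval⟩ := happrox K hconv xA hxA z₀ hz₁ hxAv
    exact ⟨_, hmem, hval⟩
  have hVne : V.Nonempty := by
    obtain ⟨t, ht, ht1, hmem, hval⟩ := happrox B hBconv xB hxB z₀ hz₀Bi hxBv
    exact ⟨_, hmem, hval⟩
  have hdisj : Disjoint U V := by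
    rw [Set.disjoint_left]
    rintro x ⟨hx1, hx2⟩ ⟨hx3, _⟩
    exact absurd (hle x ⟨interior_subset hx1, interior_subset hx3⟩) (not_le.2 hx2)
  obtain ⟨f, c₀, hfU, hfV⟩ := geometric_hahn_banach_open_open hUconv hUopen hVconv hVopen hdisj
  set g := (InnerProductSpace.toDual ℝ (EuclideanSpace ℝ (Fin d))).symm f with hg_def
  have hrep : ∀ x, f x = ⟪g, x⟫ := fun x => (InnerProductSpace.toDual_symm_apply).symm
  have hgne : g ≠ 0 := by
    intro h0
    obtain ⟨u₀, hu₀⟩ := hUne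
    obtain ⟨v₀, hv₀⟩ := hVne
    have h1 := hfU u₀ hu₀
    have h2 := hfV v₀ hv₀
    rw [hrep, h0] at h1 h2
    simp only [inner_zero_left] at h1 h2
    linarith
  -- union bounds
  have hAunion : ∀ x ∈ K, ⟪x, v⟫ ≤ c ∨ ⟪x, g⟫ ≤ c₀ := by
    intro x hx
    by_cases hxv : ⟪x, v⟫ ≤ c
    · exact Or.inl hxv
    · right
      push_neg at hxv
      obtain ⟨t₀, ht₀, ht₀1, hkeep⟩ := small_keep (β := ⟪z₀ - x, v⟫) hxv
      rw [real_inner_comm]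
      apply le_of_small_pos (β := ⟪g, z₀ - x⟫) ht₀
      intro t ht htle
      have hmem : x + t • (z₀ - x) ∈ U := by
        refine ⟨hconv.add_smul_sub_mem_interior hx hz₁ ⟨ht, htle.trans ht₀1⟩, ?_⟩
        have := hkeep t ht htle
        simp only [Set.mem_setOf_eq]
        rwa [inner_add_left, real_inner_smul_left]
      have := hfU _ hmem
      rwa [hrep, inner_add_right, real_inner_smul_right] at this
  have hBunion : ∀ x ∈ B, ⟪x, v⟫ ≤ c ∨ ⟪x, -g⟫ ≤ -c₀ := by
    intro x hx
    by_cases hxv : ⟪x, v⟫ ≤ c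
    · exact Or.inl hxv
    · right
      push_neg at hxv
      obtain ⟨t₀, ht₀, ht₀1, hkeep⟩ := small_keep (β := ⟪z₀ - x, v⟫) hxv
      rw [inner_neg_right, neg_le_neg_iff, real_inner_comm]
      have : -⟪g, x⟫ ≤ -c₀ → c₀ ≤ ⟪g, x⟫ := by intro h; linarith
      apply this
      apply le_of_small_pos (β := -⟪g, z₀ - x⟫) ht₀
      intro t ht htle
      have hmem : x + t • (z₀ - x) ∈ V := by
        refine ⟨hBconv.add_smul_sub_mem_interior hx hz₀Bi ⟨ht, htle.trans ht₀1⟩, ?_⟩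
        have := hkeep t ht htle
        simp only [Set.mem_setOf_eq]
        rwa [inner_add_left, real_inner_smul_left]
      have := hfV _ hmem
      rw [hrep, inner_add_right, real_inner_smul_right] at this
      linarith
  obtain ⟨lamA, muA, hlamA, hmuA, hsumA, hboundA⟩ := lemmaU hconv hne hv hgne hAunion
  obtain ⟨lamB, muB, hlamB, hmuB, hsumB, hboundB⟩ :=
    lemmaU hBconv hBne hv (neg_ne_zero.2 hgne) hBunion
  rcases eq_or_lt_of_le hmuA with hmuA0 | hmuA0
  · -- muA = 0, so lamA > 0 and K is fully below level c
    have hlamA' : 0 < lamA := by rw [← hmuA0] at hsumA; simpa using hsumA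
    have hAll : ∀ x ∈ K, ⟪x, v⟫ ≤ c := by
      intro x hx
      have := hboundA x hx
      rw [← hmuA0] at this
      simp only [zero_mul, add_zero] at this
      exact le_of_mul_le_mul_left this hlamA'
    refine ⟨v, 0, add_zero v, ?_⟩
    rw [sfn_zero hK hne, inner_zero_right]
    simpa using sfn_le hne hAll
  rcases eq_or_lt_of_le hmuB with hmuB0 | hmuB0
  · have hlamB' : 0 < lamB := by rw [← hmuB0] at hsumB; simpa using hsumB
    have hAll : ∀ x ∈ B, ⟪x, v⟫ ≤ c := by
      intro x hx
      have := hboundB x hx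
      rw [← hmuB0] at this
      simp only [zero_mul, add_zero] at this
      exact le_of_mul_le_mul_left this hlamB'
    refine ⟨0, v, zero_add v, ?_⟩
    rw [sfn_zero hK hne]
    have : sfn B v ≤ c := sfn_le hBne hAll
    rw [sfn_tset hK hne] at this
    linarith
  -- main case : muA > 0 and muB > 0
  have hlam_pos : 0 < lamA ∨ 0 < lamB := by
    by_contra h0
    push_neg at h0
    have hlamA0 : lamA = 0 := le_antisymm h0.1 hlamA
    have hlamB0 : lamB = 0 := le_antisymm h0.2 hlamB
    -- then K is below the g-hyperplane and B above it; contradiction at z₀ interior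
    have hKg : ∀ x ∈ K, ⟪x, g⟫ ≤ c₀ := by
      intro x hx
      have := hboundA x hx
      rw [hlamA0] at this
      simp only [zero_mul, zero_add] at this
      exact le_of_mul_le_mul_left this hmuA0
    have hBg : ∀ x ∈ B, c₀ ≤ ⟪x, g⟫ := by
      intro x hx
      have := hboundB x hx
      rw [hlamB0] at this
      simp only [zero_mul, zero_add, inner_neg_right] at this
      have h2 := le_of_mul_le_mul_left this hmuB0
      linarith
    obtain ⟨ε, hε, hball⟩ := Metric.mem_nhds_iff.1 (mem_interior_iff_mem_nhds.1 hz₁)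
    have hgnorm : (0:ℝ) < ‖g‖ := norm_pos_iff.2 hgne
    set z' := z₀ + (ε / (2 * ‖g‖)) • g with hz'_def
    have hz'K : z' ∈ K := by
      apply hball
      rw [Metric.mem_ball, hz'_def, dist_eq_norm]
      have : z₀ + (ε / (2 * ‖g‖)) • g - z₀ = (ε / (2 * ‖g‖)) • g := by abel
      rw [this, norm_smul, Real.norm_eq_abs, abs_of_pos (by positivity)]
      rw [div_mul_eq_mul_div, div_lt_iff₀ (by positivity)]
      nlinarith
    have h1 := hKg z' hz'K
    have h2 := hBg z₀ hz₀B
    rw [hz'_def, inner_add_left, real_inner_smul_left, real_inner_self_eq_norm_sq] at h1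
    have hq : 0 < ε / (2 * ‖g‖) * ‖g‖ ^ 2 := by positivity
    linarith
  set Δ := lamA * muB + lamB * muA with hΔ_def
  have hΔpos : 0 < Δ := by
    rcases hlam_pos with h | h
    · have h1 : 0 < lamA * muB := mul_pos h hmuB0
      have h2 : 0 ≤ lamB * muA := mul_nonneg hlamB hmuA0.le
      linarith
    · have h1 : 0 ≤ lamA * muB := mul_nonneg hlamA hmuB0.le
      have h2 : 0 < lamB * muA := mul_pos h hmuA0
      linarith
  refine ⟨(muB / Δ) • (lamA • v + muA • g), (muA / Δ) • (lamB • v + muB • (-g)), ?_, ?_⟩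
  · rw [smul_add, smul_add, smul_smul, smul_smul, smul_smul, smul_smul]
    rw [show (muB / Δ * lamA) • v + (muB / Δ * muA) • g +
        ((muA / Δ * lamB) • v + (muA / Δ * muB) • (-g))
        = (muB / Δ * lamA + muA / Δ * lamB) • v +
          (muB / Δ * muA - muA / Δ * muB) • g by
      rw [add_smul, sub_smul]
      simp only [smul_neg]
      abel]
    have e1 : muB / Δ * lamA + muA / Δ * lamB = 1 := by
      field_simp
      ring
    have e2 : muB / Δ * muA - muA / Δ * muB = 0 := by ring
    rw [e1, e2, one_smul, zero_smul, add_zero]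
  · have hA1 : sfn K (lamA • v + muA • g) ≤ lamA * c + muA * c₀ := by
      apply sfn_le hne
      intro x hx
      rw [inner_add_right, real_inner_smul_right, real_inner_smul_right]
      exact hboundA x hx
    have hB1 : sfn B (lamB • v + muB • (-g)) ≤ lamB * c + muB * (-c₀) := by
      apply sfn_le hBne
      intro x hx
      rw [inner_add_right, real_inner_smul_right, real_inner_smul_right]
      have := hboundB x hx
      linarith
    have hA2 : sfn K ((muB / Δ) • (lamA • v + muA • g)) ≤ (muB / Δ) * (lamA * c + muA * c₀) := by
      rw [sfn_smul hK hne _ (by positivity)]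
      exact mul_le_mul_of_nonneg_left hA1 (by positivity)
    have hB2 : sfn B ((muA / Δ) • (lamB • v + muB • (-g)))
        ≤ (muA / Δ) * (lamB * c + muB * (-c₀)) := by
      rw [sfn_smul hBcomp hBne _ (by positivity)]
      exact mul_le_mul_of_nonneg_left hB1 (by positivity)
    rw [sfn_tset hK hne] at hB2
    have hsum : (muB / Δ) * (lamA * c + muA * c₀) + (muA / Δ) * (lamB * c + muB * (-c₀)) = c := by
      field_simp
      ring
    linarith
lemma int_chord {K : Set (EuclideanSpace ℝ (Fin d))} (hK : IsCompact K) (hconv : Convex ℝ K)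
    (hne : K.Nonempty) {ω : ℝ}
    (hw : ∀ v : EuclideanSpace ℝ (Fin d), ‖v‖ = 1 → ω ≤ wfn K v)
    {s : EuclideanSpace ℝ (Fin d)} (hs : ‖s‖ < ω) :
    ∃ z₀, z₀ ∈ interior K ∧ z₀ + s ∈ interior K := by
  have hω : 0 < ω := lt_of_le_of_lt (norm_nonneg s) hs
  have hint : (interior K).Nonempty := interior_nonempty_of_wfn hK hconv hne hω hw
  by_contra hcon
  push_neg at hcon
  have hdisj : Disjoint (interior K) (interior (tset K s)) := by
    rw [Set.disjoint_left]
    intro z hz1 hz2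
    rw [interior_tset] at hz2
    exact absurd hz2 (hcon z hz1)
  obtain ⟨f, c₀, hfU, hfV⟩ := geometric_hahn_banach_open_open hconv.interior isOpen_interior
    (tset_convex hconv s).interior isOpen_interior hdisj
  set g := (InnerProductSpace.toDual ℝ (EuclideanSpace ℝ (Fin d))).symm f with hg_def
  have hrep : ∀ x, f x = ⟪g, x⟫ := fun x => (InnerProductSpace.toDual_symm_apply).symm
  obtain ⟨z₁, hz₁⟩ := id hint
  have hz₂ : z₁ - s ∈ interior (tset K s) := by
    rw [interior_tset]
    show z₁ - s + s ∈ interior K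
    rw [sub_add_cancel]
    exact hz₁
  have hgne : g ≠ 0 := by
    intro h0
    have h1 := hfU z₁ hz₁
    have h2 := hfV _ hz₂
    rw [hrep, h0] at h1 h2
    simp only [inner_zero_left] at h1 h2
    linarith
  -- bounds on all of K via segments into the interior
  have hKle : ∀ x ∈ K, f x ≤ c₀ := by
    intro x hx
    have := le_of_small_pos (α := f x) (β := f z₁ - f x) (γ := c₀) one_pos ?_
    · exact this
    intro t ht ht1
    have hmem : x + t • (z₁ - x) ∈ interior K :=
      hconv.add_smul_sub_mem_interior hx hz₁ ⟨ht, ht1⟩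
    have := hfU _ hmem
    rw [map_add, map_smul, smul_eq_mul, map_sub] at this
    linarith
  have hBge : ∀ x ∈ tset K s, c₀ ≤ f x := by
    intro x hx
    have hkey := le_of_small_pos (α := -f x) (β := -(f (z₁ - s) - f x)) (γ := -c₀) one_pos ?_
    · linarith
    intro t ht ht1
    have hmem : x + t • (z₁ - s - x) ∈ interior (tset K s) :=
      (tset_convex hconv s).add_smul_sub_mem_interior hx hz₂ ⟨ht, ht1⟩
    have := hfV _ hmem
    rw [map_add, map_smul, smul_eq_mul, map_sub] at this
    linarith
  -- now derive a width contradiction in direction g/‖g‖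
  have hgn : (0:ℝ) < ‖g‖ := norm_pos_iff.2 hgne
  set e := ‖g‖⁻¹ • g with he_def
  have hen : ‖e‖ = 1 := by
    rw [he_def, norm_smul, norm_inv, norm_norm, inv_mul_cancel₀ hgn.ne']
  have h1 : sfn K e ≤ ‖g‖⁻¹ * c₀ := by
    apply sfn_le hne
    intro x hx
    rw [he_def, real_inner_smul_right]
    have := hKle x hx
    rw [hrep, real_inner_comm] at this
    exact mul_le_mul_of_nonneg_left this (by positivity)
  have h2 : sfn K (-e) ≤ ‖g‖⁻¹ * (-(c₀ + ⟪g, s⟫)) := by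
    apply sfn_le hne
    intro x hx
    have hxs : x - s ∈ tset K s := by
      show x - s + s ∈ K
      rw [sub_add_cancel]; exact hx
    have hb := hBge _ hxs
    rw [hrep, inner_sub_right] at hb
    have hform : ⟪x, -e⟫ = ‖g‖⁻¹ * (-⟪g, x⟫) := by
      rw [he_def, inner_neg_right, real_inner_smul_right, real_inner_comm x g]
      ring
    rw [hform]
    apply mul_le_mul_of_nonneg_left _ (by positivity : (0:ℝ) ≤ ‖g‖⁻¹)
    linarith
  have hcs : -⟪g, s⟫ ≤ ‖g‖ * ‖s‖ := by
    have := abs_real_inner_le_norm g s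
    linarith [neg_abs_le ⟪g, s⟫, abs_le.1 this]
  have hwe := hw e hen
  rw [wfn] at hwe
  have hchain : ω ≤ ‖g‖⁻¹ * c₀ + ‖g‖⁻¹ * (-(c₀ + ⟪g, s⟫)) := le_trans hwe (add_le_add h1 h2)
  have h7 : ‖g‖⁻¹ * c₀ + ‖g‖⁻¹ * (-(c₀ + ⟪g, s⟫)) = ‖g‖⁻¹ * (-⟪g, s⟫) := by ring
  rw [h7] at hchain
  have h8 : ‖g‖⁻¹ * (-⟪g, s⟫) ≤ ‖g‖⁻¹ * (‖g‖ * ‖s‖) :=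
    mul_le_mul_of_nonneg_left hcs (by positivity)
  have h9 : ‖g‖⁻¹ * (‖g‖ * ‖s‖) = ‖s‖ := by field_simp
  linarith

/-- One erosion step. -/
lemma erode_step {K : Set (EuclideanSpace ℝ (Fin d))} (hK : IsCompact K) (hconv : Convex ℝ K)
    (hne : K.Nonempty) {ω : ℝ}
    (hw : ∀ v : EuclideanSpace ℝ (Fin d), ‖v‖ = 1 → ω ≤ wfn K v)
    {s : EuclideanSpace ℝ (Fin d)} (hs : ‖s‖ < ω) :
    IsCompact (K ∩ tset K s) ∧ Convex ℝ (K ∩ tset K s) ∧ (K ∩ tset K s).Nonempty ∧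
      ∀ v : EuclideanSpace ℝ (Fin d), ‖v‖ = 1 → ω - ‖s‖ ≤ wfn (K ∩ tset K s) v := by
  obtain ⟨z₀, hz₁, hz₂⟩ := int_chord hK hconv hne hw hs
  have hK' : IsCompact (K ∩ tset K s) := hK.inter_right (tset_compact hK s).isClosed
  have hconv' : Convex ℝ (K ∩ tset K s) := hconv.inter (tset_convex hconv s)
  have hne' : (K ∩ tset K s).Nonempty := ⟨z₀, interior_subset hz₁,
    (show z₀ + s ∈ K from interior_subset hz₂)⟩
  refine ⟨hK', hconv', hne', ?_⟩
  intro v hv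
  have hvne : v ≠ 0 := fun h => by rw [h, norm_zero] at hv; norm_num at hv
  obtain ⟨a, b, hab, h1⟩ := dual_decomp hK hconv hz₁ hz₂ hvne
  obtain ⟨a', b', hab', h2⟩ := dual_decomp hK hconv hz₁ hz₂ (neg_ne_zero.2 hvne)
  set p := a + a' with hp_def
  have hbb' : b + b' = -p := by
    have h3 : (b + b') + (a + a') = (a + b) + (a' + b') := by abel
    rw [hab, hab'] at h3
    have h4 : (b + b') + (a + a') = 0 := by rw [h3]; abel
    exact eq_neg_of_add_eq_zero_left h4
  have hinner : -(‖s‖ * ‖p‖) ≤ ⟪s, p⟫ := by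
    have := abs_real_inner_le_norm s p
    linarith [neg_abs_le ⟪s, p⟫, abs_le.1 this]
  have hW : sfn K a + sfn K b + sfn K a' + sfn K b' + ⟪s, p⟫ ≤ wfn (K ∩ tset K s) v := by
    have hsb : ⟪s, b⟫ + ⟪s, b'⟫ = -⟪s, p⟫ := by
      rw [← inner_add_right, hbb', inner_neg_right]
    rw [wfn]
    have := add_le_add h1 h2
    linarith
  by_cases hpn : ‖p‖ ≤ 1
  · have hS : sfn K v + sfn K (-v) ≤ sfn K a + sfn K b + sfn K a' + sfn K b' := by
      have e1 : sfn K v ≤ sfn K a + sfn K b := by rw [← hab]; exact sfn_add_le hK hne a b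
      have e2 : sfn K (-v) ≤ sfn K a' + sfn K b' := by rw [← hab']; exact sfn_add_le hK hne a' b'
      linarith
    have hWv := hw v hv
    rw [wfn] at hWv
    have h5 : ‖s‖ * ‖p‖ ≤ ‖s‖ * 1 := mul_le_mul_of_nonneg_left hpn (norm_nonneg s)
    linarith
  · push_neg at hpn
    have hpne : p ≠ 0 := by
      intro h0; rw [h0, norm_zero] at hpn; linarith
    have hS : sfn K p + sfn K (-p) ≤ sfn K a + sfn K b + sfn K a' + sfn K b' := by
      have e1 : sfn K p ≤ sfn K a + sfn K a' := by rw [hp_def]; exact sfn_add_le hK hne a a'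
      have e2 : sfn K (-p) ≤ sfn K b + sfn K b' := by rw [← hbb']; exact sfn_add_le hK hne b b'
      linarith
    have hWp : ω * ‖p‖ ≤ wfn K p := wfn_of_unit_bound hK hne hw hpne
    rw [wfn] at hWp
    have h5 : (ω - ‖s‖) * 1 ≤ (ω - ‖s‖) * ‖p‖ :=
      mul_le_mul_of_nonneg_left hpn.le (by linarith)
    nlinarith
/-- The tower of erosions. -/
def erofam (K₀ : Set (EuclideanSpace ℝ (Fin d))) (s : ℕ → EuclideanSpace ℝ (Fin d)) :
    ℕ → Set (EuclideanSpace ℝ (Fin d))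
  | 0 => K₀
  | (j+1) => erofam K₀ s j ∩ tset (erofam K₀ s j) (s j)

lemma tower_good {K₀ : Set (EuclideanSpace ℝ (Fin d))} (hK : IsCompact K₀)
    (hconv : Convex ℝ K₀) (hne : K₀.Nonempty) {ω : ℝ}
    (hw : ∀ v : EuclideanSpace ℝ (Fin d), ‖v‖ = 1 → ω ≤ wfn K₀ v)
    (s : ℕ → EuclideanSpace ℝ (Fin d)) {n : ℕ}
    (htot : ∑ i ∈ Finset.range n, ‖s i‖ < ω) :
    ∀ j, j ≤ n → IsCompact (erofam K₀ s j) ∧ Convex ℝ (erofam K₀ s j) ∧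
      (erofam K₀ s j).Nonempty ∧
      ∀ v : EuclideanSpace ℝ (Fin d), ‖v‖ = 1 →
        ω - ∑ i ∈ Finset.range j, ‖s i‖ ≤ wfn (erofam K₀ s j) v := by
  intro j
  induction j with
  | zero =>
    intro _
    exact ⟨hK, hconv, hne, fun v hv => by simpa [erofam] using hw v hv⟩
  | succ j ih =>
    intro hj
    obtain ⟨h1, h2, h3, h4⟩ := ih (by omega)
    have hpartial : ∑ i ∈ Finset.range (j+1), ‖s i‖ ≤ ∑ i ∈ Finset.range n, ‖s i‖ :=
      Finset.sum_le_sum_of_subset_of_nonneg (Finset.range_subset_range.2 hj)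
        (fun i _ _ => norm_nonneg _)
    have hsj : ‖s j‖ < ω - ∑ i ∈ Finset.range j, ‖s i‖ := by
      rw [Finset.sum_range_succ] at hpartial
      linarith
    obtain ⟨g1, g2, g3, g4⟩ := erode_step h1 h2 h3 h4 hsj
    refine ⟨g1, g2, g3, fun v hv => ?_⟩
    have := g4 v hv
    rw [Finset.sum_range_succ]
    show ω - (∑ i ∈ Finset.range j, ‖s i‖ + ‖s j‖) ≤ wfn (erofam K₀ s (j+1)) v
    have heq : erofam K₀ s (j+1) = erofam K₀ s j ∩ tset (erofam K₀ s j) (s j) := rfl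
    rw [heq]
    linarith

lemma tower_mem (K₀ : Set (EuclideanSpace ℝ (Fin d))) (s : ℕ → EuclideanSpace ℝ (Fin d)) :
    ∀ j, ∀ x ∈ erofam K₀ s j, ∀ S : Finset ℕ, (∀ i ∈ S, i < j) →
      x + ∑ i ∈ S, s i ∈ K₀ := by
  intro j
  induction j with
  | zero =>
    intro x hx S hS
    have : S = ∅ := Finset.eq_empty_of_forall_notMem fun i hi => Nat.not_lt_zero i (hS i hi)
    subst this
    simpa [erofam] using hx
  | succ j ih =>
    intro x hx S hS
    obtain ⟨hx1, hx2⟩ := hx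
    by_cases hj : j ∈ S
    · have key : x + ∑ i ∈ S, s i = (x + s j) + ∑ i ∈ S.erase j, s i := by
        rw [← Finset.add_sum_erase S s hj]
        abel
      rw [key]
      exact ih _ hx2 _ (fun i hi => by
        obtain ⟨hne, hmem⟩ := Finset.mem_erase.1 hi
        have := hS i hmem
        omega)
    · exact ih x hx1 S (fun i hi => by
        have h1 := hS i hi
        have h2 : i ≠ j := fun h => hj (h ▸ hi)
        omega)

/-- sign as a real number -/
def sg (b : Bool) : ℝ := if b then 1 else -1

lemma sg_mul_self (b : Bool) : sg b * sg b = 1 := by cases b <;> norm_num [sg]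

lemma sg_le_abs (b : Bool) (x : ℝ) : sg b * x ≤ |x| := by
  cases b <;> simp [sg] <;> [exact neg_le_abs x; exact le_abs_self x]

/-- Bang's sign-choice lemma. -/
lemma sign_lemma {n : ℕ} (u : Fin n → EuclideanSpace ℝ (Fin d)) (hu : ∀ i, ‖u i‖ = 1)
    (ν : Fin n → ℝ) (hν : ∀ i, 0 < ν i) (m : Fin n → ℝ) :
    ∃ ε : Fin n → Bool, ∀ i,
      ν i ≤ |⟪∑ j, (sg (ε j) * ν j) • u j, u i⟫ - m i| := by
  set q : (Fin n → Bool) → EuclideanSpace ℝ (Fin d) :=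
    fun ε => ∑ j, (sg (ε j) * ν j) • u j with hq_def
  set F : (Fin n → Bool) → ℝ :=
    fun ε => ‖q ε‖ ^ 2 - 2 * ∑ j, sg (ε j) * ν j * m j with hF_def
  obtain ⟨ε, hε⟩ := Finite.exists_max F
  refine ⟨ε, fun i => ?_⟩
  set t := 2 * sg (ε i) * ν i with ht_def
  set ε' := Function.update ε i (!(ε i)) with hε'_def
  have hsgnot : sg (!(ε i)) = - sg (ε i) := by cases (ε i) <;> simp [sg]
  have hq' : q ε' = q ε - t • u i := by
    have hfun : ∀ j, (sg (ε' j) * ν j) • u j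
        = Function.update (fun k => (sg (ε k) * ν k) • u k) i ((sg (!(ε i)) * ν i) • u i) j := by
      intro j
      by_cases hji : j = i
      · subst hji; simp [hε'_def]
      · simp [hε'_def, Function.update_of_ne hji]
    have e1 : q ε' = (sg (!(ε i)) * ν i) • u i
        + ∑ j ∈ Finset.univ.erase i, (sg (ε j) * ν j) • u j := by
      rw [hq_def]
      simp only [hfun]
      rw [Finset.sum_update_of_mem (Finset.mem_univ i), Finset.sdiff_singleton_eq_erase]
    have e2 : q ε = (sg (ε i) * ν i) • u i
        + ∑ j ∈ Finset.univ.erase i, (sg (ε j) * ν j) • u j :=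
      (Finset.add_sum_erase _ _ (Finset.mem_univ i)).symm
    rw [e1, e2, hsgnot, ht_def]
    rw [show ((-sg (ε i)) * ν i) • u i = (sg (ε i) * ν i) • u i - (2 * sg (ε i) * ν i) • u i by
      rw [← sub_smul]; congr 1; ring]
    abel
  have hM' : ∑ j, sg (ε' j) * ν j * m j = (∑ j, sg (ε j) * ν j * m j) - t * m i := by
    have hfun : ∀ j, sg (ε' j) * ν j * m j
        = Function.update (fun k => sg (ε k) * ν k * m k) i (sg (!(ε i)) * ν i * m i) j := by
      intro j
      by_cases hji : j = i
      · subst hji; simp [hε'_def]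
      · simp [hε'_def, Function.update_of_ne hji]
    have e1 : ∑ j, sg (ε' j) * ν j * m j = sg (!(ε i)) * ν i * m i
        + ∑ j ∈ Finset.univ.erase i, sg (ε j) * ν j * m j := by
      simp only [hfun]
      rw [Finset.sum_update_of_mem (Finset.mem_univ i), Finset.sdiff_singleton_eq_erase]
    have e2 : ∑ j, sg (ε j) * ν j * m j = sg (ε i) * ν i * m i
        + ∑ j ∈ Finset.univ.erase i, sg (ε j) * ν j * m j :=
      (Finset.add_sum_erase _ _ (Finset.mem_univ i)).symm
    rw [e1, e2, hsgnot, ht_def]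
    ring
  have hnorm : ‖q ε'‖ ^ 2 = ‖q ε‖ ^ 2 - 2 * (t * ⟪q ε, u i⟫) + t ^ 2 := by
    rw [hq', norm_sub_sq_real, real_inner_smul_right]
    have : ‖t • u i‖ ^ 2 = t ^ 2 := by
      rw [norm_smul, hu i, mul_one, Real.norm_eq_abs, sq_abs]
    rw [this]
  have hle := hε ε'
  rw [hF_def] at hle
  simp only at hle
  rw [hnorm, hM'] at hle
  -- hle : ‖q ε‖² - 2 t ⟪q ε, u i⟫ + t² - 2 (M - t m i) ≤ ‖q ε‖² - 2 M
  have hkey : t * (⟪q ε, u i⟫ - m i) ≥ t ^ 2 / 2 := by nlinarith [hle]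
  have ht2 : t ^ 2 = 4 * ν i ^ 2 := by
    rw [ht_def]
    have := sg_mul_self (ε i)
    nlinarith [this]
  have hsgle : ν i ≤ sg (ε i) * (⟪q ε, u i⟫ - m i) := by
    have hνi := hν i
    by_contra hcon
    push_neg at hcon
    have h2 : 2 * ν i * (sg (ε i) * (⟪q ε, u i⟫ - m i)) < 2 * ν i * ν i :=
      mul_lt_mul_of_pos_left hcon (by positivity)
    rw [ht_def] at hkey ht2
    nlinarith [hkey, ht2, h2]
  exact le_trans hsgle (sg_le_abs _ _)
end BangAux

/-- **Bang's plank theorem.** If a convex body `C` in `ℝ^d` is covered by finitely many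
planks, then the sum of the widths of the planks is at least the minimal width of `C`. -/
theorem bang_plank_theorem {d n : ℕ} (C : Set (EuclideanSpace ℝ (Fin d)))
    (hC : IsCompact C) (hCconv : Convex ℝ C) (hCint : (interior C).Nonempty)
    (P : Fin n → Set (EuclideanSpace ℝ (Fin d))) (w : Fin n → ℝ)
    (hP : ∀ i, IsPlank (P i) (w i)) (hcover : C ⊆ ⋃ i, P i) :
    minWidth C ≤ ∑ i, w i := by
  by_contra hcon
  push_neg at hcon
  have hCne : C.Nonempty := hCint.mono interior_subset
  have hbdd : BddBelow (Set.range fun uv : {v : EuclideanSpace ℝ (Fin d) // ‖v‖ = 1} =>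
      dirWidth C uv) := by
    refine ⟨0, ?_⟩
    rintro r ⟨uv, rfl⟩
    show (0:ℝ) ≤ dirWidth C uv
    unfold dirWidth
    rw [BangAux.dirWidth_eq_wfn hC hCne]
    exact BangAux.wfn_nonneg hC hCne _
  have hw : ∀ v : EuclideanSpace ℝ (Fin d), ‖v‖ = 1 → minWidth C ≤ BangAux.wfn C v := by
    intro v hv
    have h2 : minWidth C ≤ dirWidth C v := ciInf_le hbdd (⟨v, hv⟩ : {v // ‖v‖ = 1})
    unfold dirWidth at h2
    rwa [BangAux.dirWidth_eq_wfn hC hCne] at h2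
  have hwpos : ∀ i, 0 < w i := fun i => (hP i).1
  choose u cc hu hPeq using fun i => (hP i).2
  set δ := (minWidth C - ∑ i, w i) / (n + 1) with hδ
  have hδpos : 0 < δ := div_pos (by linarith) (by positivity)
  set ν : Fin n → ℝ := fun i => (w i + δ) / 2 with hν
  have hνpos : ∀ i, 0 < ν i := fun i => by
    rw [hν]; have := hwpos i; positivity
  set sν : ℕ → EuclideanSpace ℝ (Fin d) :=
    fun j => if h : j < n then (w ⟨j, h⟩ + δ) • u ⟨j, h⟩ else 0 with hsν
  have hnorm_sν : ∀ i : Fin n, ‖sν i.val‖ = w i + δ := by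
    intro i
    rw [hsν]
    simp only [i.isLt, dif_pos, Fin.eta]
    rw [norm_smul, hu i, mul_one, Real.norm_eq_abs,
      abs_of_pos (by linarith [hwpos i] : (0:ℝ) < w i + δ)]
  have htot : ∑ j ∈ Finset.range n, ‖sν j‖ < minWidth C := by
    rw [← Fin.sum_univ_eq_sum_range (fun j => ‖sν j‖) n]
    have h1 : ∑ i : Fin n, ‖sν i.val‖ = ∑ i : Fin n, (w i + δ) :=
      Finset.sum_congr rfl fun i _ => hnorm_sν i
    rw [h1, Finset.sum_add_distrib, Finset.sum_const, Finset.card_univ, Fintype.card_fin,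
      nsmul_eq_mul]
    have h2 : ((n:ℝ) + 1) * δ = minWidth C - ∑ i, w i := by
      rw [hδ]
      field_simp
    have h3 : ((n:ℝ) + 1) * δ = (n:ℝ) * δ + δ := by ring
    linarith
  obtain ⟨_, _, ⟨x₀, hx₀⟩, _⟩ :=
    BangAux.tower_good hC hCconv hCne hw sν htot n le_rfl
  have hx₀mem : ∀ S : Finset ℕ, (∀ i ∈ S, i < n) → x₀ + ∑ i ∈ S, sν i ∈ C :=
    fun S hS => BangAux.tower_mem C sν n x₀ hx₀ S hS
  set ctr := x₀ + ∑ i : Fin n, ν i • u i with hctr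
  obtain ⟨ε, hε⟩ := BangAux.sign_lemma u hu ν hνpos (fun i => ⟪cc i, u i⟫ - ⟪ctr, u i⟫)
  set qv := ∑ j, (BangAux.sg (ε j) * ν j) • u j with hqv
  have hymem : ctr + qv ∈ C := by
    set S : Finset ℕ := (Finset.univ.filter fun i : Fin n => ε i).image Fin.val with hS
    have hSlt : ∀ i ∈ S, i < n := by
      intro i hi
      rw [hS] at hi
      obtain ⟨k, _, rfl⟩ := Finset.mem_image.1 hi
      exact k.isLt
    have hsum : ∑ i ∈ S, sν i = ∑ i : Fin n, (if ε i then (w i + δ) • u i else 0) := by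
      rw [hS, Finset.sum_image (fun a _ b _ h => Fin.val_injective h), Finset.sum_filter]
      apply Finset.sum_congr rfl
      intro i _
      by_cases hεi : ε i = true
      · rw [if_pos hεi, if_pos hεi, hsν]
        simp only [i.isLt, dif_pos, Fin.eta]
      · rw [if_neg hεi, if_neg hεi]
    have hcomb : (∑ i : Fin n, ν i • u i) + qv
        = ∑ i : Fin n, (if ε i then (w i + δ) • u i else 0) := by
      rw [hqv, ← Finset.sum_add_distrib]
      apply Finset.sum_congr rfl
      intro i _
      cases hεi : ε i
      · simp only [Bool.false_eq_true, if_false]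
        rw [show BangAux.sg false = -1 from rfl, ← add_smul]
        rw [show ν i + -1 * ν i = 0 by ring, zero_smul]
      · simp only [if_true]
        rw [show BangAux.sg true = 1 from rfl, ← add_smul]
        congr 1
        rw [hν]
        ring
    rw [hctr, add_assoc, hcomb, ← hsum]
    exact hx₀mem S hSlt
  have hcov := hcover hymem
  rw [Set.mem_iUnion] at hcov
  obtain ⟨i, hi⟩ := hcov
  rw [hPeq i] at hi
  simp only [Set.mem_setOf_eq] at hi
  have h2 := hε i
  have h3 : ⟪ctr + qv - cc i, u i⟫ = ⟪qv, u i⟫ - (⟪cc i, u i⟫ - ⟪ctr, u i⟫) := by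
    rw [inner_sub_left, inner_add_left]
    ring
  rw [h3] at hi

  have h4 : ν i ≤ w i / 2 := le_trans h2 hi
  rw [hν] at h4
  simp only at h4
  linarith
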